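/- Let D be a finite digraph of order n with average out-degree d̄⁺ = (∑_v d⁺(v))/n. Then the feedback vertex number τ₀(D) satisfies τ₀(D) ≤ n · (1 − 1/(d̄⁺ + 1)); equivalently, D has an acyclic set of size at least n/(d̄⁺ + 1). -/

import Mathlib

open Finset

/-- `S` is an acyclic set for the arc relation `A`. -/
def AcyclicOn {V : Type*} (A : V → V → Prop) (S : Finset V) : Prop :=
  ∀ v : V, ¬ Relation.TransGen (fun x y => x ∈ S ∧ y ∈ S ∧ A x y) v v

/-- Out-degree of `v`. -/
def outDeg {V : Type*} [Fintype V] (A : V → V → Prop) [DecidableRel A] (v : V) : ℕ :=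
  (Finset.univ.filter (fun u => A v u)).card

/-- The feedback vertex number: minimum size of a set `F` whose complement is acyclic. -/
noncomputable def tau0 {V : Type*} [Fintype V] [DecidableEq V] (A : V → V → Prop) : ℕ :=
  sInf {k : ℕ | ∃ F : Finset V, AcyclicOn A (Finset.univ \ F) ∧ F.card = k}

lemma acyclicOn_insert {V : Type*} [DecidableEq V] {A : V → V → Prop} (hirr : Irreflexive A)
    {S' : Finset V} {v : V} (hv : v ∉ S') (hno : ∀ u ∈ S', ¬ A v u)
    (h : AcyclicOn A S') : AcyclicOn A (insert v S') := by
  intro w hw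
  set S : Finset V := insert v S' with hS
  have hstep : ∀ x y : V, (x ∈ S ∧ y ∈ S ∧ A x y) → x ∈ S' := by
    rintro x y ⟨hx, hy, hxy⟩
    rcases Finset.mem_insert.1 hx with rfl | h' 
    · rcases Finset.mem_insert.1 hy with rfl | h''
      · exact absurd hxy (hirr _)
      · exact absurd hxy (hno y h'')
    · exact h'
  have key : ∀ a b : V, Relation.TransGen (fun x y => x ∈ S ∧ y ∈ S ∧ A x y) a b →
      b ∈ S' → Relation.TransGen (fun x y => x ∈ S' ∧ y ∈ S' ∧ A x y) a b := by
    intro a b hab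
    induction hab with
    | single h1 => exact fun hb => .single ⟨hstep _ _ h1, hb, h1.2.2⟩
    | tail hab h1 ih => exact fun hc => .tail (ih (hstep _ _ h1)) ⟨hstep _ _ h1, hc, h1.2.2⟩
  have hwS' : w ∈ S' := by
    obtain ⟨c, h1, -⟩ := Relation.TransGen.head'_iff.1 hw
    exact hstep _ _ h1
  exact h w (key w w hw hwS')

lemma exists_acyclic {V : Type*} [DecidableEq V] (A : V → V → Prop) [DecidableRel A]
    (hirr : Irreflexive A) :
    ∀ T : Finset V, ∃ S : Finset V, S ⊆ T ∧ AcyclicOn A S ∧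
      ∑ v ∈ T, (1 : ℝ) / ((T.filter (fun u => A v u)).card + 1) ≤ S.card := by
  intro T
  induction T using Finset.strongInduction with
  | _ T ih =>
    rcases T.eq_empty_or_nonempty with rfl | hT
    · refine ⟨∅, Finset.Subset.refl _, ?_, by simp⟩
      intro w hw
      obtain ⟨c, h1, -⟩ := Relation.TransGen.head'_iff.1 hw
      exact absurd h1.1 (Finset.notMem_empty _)
    · obtain ⟨v, hvT, hmin⟩ :=
        T.exists_min_image (fun v => ((T.filter (fun u => A v u)).card : ℝ)) hT
      set R : Finset V := insert v (T.filter (fun u => A v u)) with hR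
      have hRT : R ⊆ T := by
        intro x hx
        rcases Finset.mem_insert.1 hx with rfl | hx
        · exact hvT
        · exact (Finset.mem_filter.1 hx).1
      have hvR : v ∈ R := Finset.mem_insert_self _ _
      set T' : Finset V := T \ R with hT'
      have hssub : T' ⊂ T := by
        refine Finset.ssubset_iff_of_subset (Finset.sdiff_subset) |>.2 ⟨v, hvT, ?_⟩
        simp [hT', hvR]
      obtain ⟨S', hS'T', hS'ac, hS'sum⟩ := ih T' hssub
      have hvS' : v ∉ S' := fun h => by
        have := hS'T' h
        simp [hT', hvR] at this
      have hno : ∀ u ∈ S', ¬ A v u := by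
        intro u hu hAu
        have huT' := hS'T' hu
        have huT : u ∈ T := (Finset.sdiff_subset) huT'
        have : u ∈ R := Finset.mem_insert_of_mem (Finset.mem_filter.2 ⟨huT, hAu⟩)
        simp [hT', this] at huT'
      refine ⟨insert v S', ?_, acyclicOn_insert hirr hvS' hno hS'ac, ?_⟩
      · intro x hx
        rcases Finset.mem_insert.1 hx with rfl | hx
        · exact hvT
        · exact (Finset.sdiff_subset) (hS'T' hx)
      · have hcard : ((insert v S').card : ℝ) = S'.card + 1 := by
          rw [Finset.card_insert_of_notMem hvS']; push_cast; ring
        set dv : ℝ := ((T.filter (fun u => A v u)).card : ℝ) with hdv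
        have hdv0 : (0:ℝ) < dv + 1 := by positivity
        have hRcard : (R.card : ℝ) = dv + 1 := by
          rw [hR, Finset.card_insert_of_notMem (fun h => hirr v (Finset.mem_filter.1 h).2)]
          push_cast; ring
        have hsplit : ∑ u ∈ T, (1:ℝ) / ((T.filter (fun w => A u w)).card + 1) =
            (∑ u ∈ T', (1:ℝ) / ((T.filter (fun w => A u w)).card + 1)) +
            ∑ u ∈ R, (1:ℝ) / ((T.filter (fun w => A u w)).card + 1) :=
          (Finset.sum_sdiff hRT).symm
        have hRsum : ∑ u ∈ R, (1:ℝ) / ((T.filter (fun w => A u w)).card + 1) ≤ 1 := by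
          have : ∀ u ∈ R, (1:ℝ) / ((T.filter (fun w => A u w)).card + 1) ≤ 1 / (dv + 1) := by
            intro u hu
            apply one_div_le_one_div_of_le hdv0
            have := hmin u (hRT hu)
            linarith
          calc ∑ u ∈ R, (1:ℝ) / ((T.filter (fun w => A u w)).card + 1)
              ≤ ∑ _u ∈ R, (1:ℝ) / (dv + 1) := Finset.sum_le_sum this
            _ = (R.card : ℝ) * (1 / (dv + 1)) := by rw [Finset.sum_const, nsmul_eq_mul]
            _ = 1 := by rw [hRcard]; field_simp
        have hT'sum : ∑ u ∈ T', (1:ℝ) / ((T.filter (fun w => A u w)).card + 1) ≤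
            ∑ u ∈ T', (1:ℝ) / ((T'.filter (fun w => A u w)).card + 1) := by
          apply Finset.sum_le_sum
          intro u _
          apply one_div_le_one_div_of_le (by positivity)
          have : (T'.filter (fun w => A u w)).card ≤ (T.filter (fun w => A u w)).card :=
            Finset.card_le_card (Finset.filter_subset_filter _ Finset.sdiff_subset)
          exact_mod_cast add_le_add_left (Nat.cast_le.2 this) 1
        rw [hsplit, hcard]
        have := hS'sum
        linarith

/-- `τ₀(D) ≤ n·(1 − 1/(d̄⁺+1))`; equivalently `D` has an acyclic set
of size at least `n/(d̄⁺+1)`, where `d̄⁺` is the average out-degree. -/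
theorem tau0_le_of_avg_outdegree {V : Type*} [Fintype V] [DecidableEq V]
    (A : V → V → Prop) [DecidableRel A] (hirr : Irreflexive A)
    (n : ℕ) (hn : n = Fintype.card V)
    (dbar : ℝ) (hd : dbar = (∑ v : V, (outDeg A v : ℝ)) / n) :
    (tau0 A : ℝ) ≤ n * (1 - 1 / (dbar + 1)) ∧
      ∃ S : Finset V, AcyclicOn A S ∧ (n : ℝ) / (dbar + 1) ≤ S.card := by
  obtain ⟨S, hSuniv, hSac, hSsum⟩ := exists_acyclic A hirr (Finset.univ : Finset V)
  -- the sum over univ equals the Caro–Wei sum with outDeg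
  have hsum' : ∑ v : V, (1:ℝ) / ((outDeg A v : ℝ) + 1) ≤ S.card := by
    simpa [outDeg] using hSsum
  set m : ℝ := ∑ v : V, (outDeg A v : ℝ) with hm
  have hm0 : 0 ≤ m := Finset.sum_nonneg fun v _ => by positivity
  rcases Nat.eq_zero_or_pos n with hn0 | hnpos
  · subst hn0
    have hcard0 : Fintype.card V = 0 := hn.symm
    have : IsEmpty V := Fintype.card_eq_zero_iff.1 hcard0
    constructor
    · have : tau0 A ≤ 0 := by
        apply Nat.sInf_le
        exact ⟨∅, fun v _ => (IsEmpty.false v).elim, Finset.card_empty⟩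
      simp [Nat.le_zero.1 this]
    · exact ⟨S, hSac, by simp⟩
  · have hnR : (0:ℝ) < n := by exact_mod_cast hnpos
    -- Cauchy–Schwarz: n^2 ≤ (m + n) * ∑ 1/(d+1)
    have hCS : (n:ℝ)^2 ≤ (m + n) * ∑ v : V, (1:ℝ) / ((outDeg A v : ℝ) + 1) := by
      have key := Finset.sum_mul_sq_le_sq_mul_sq Finset.univ
        (fun v : V => Real.sqrt ((outDeg A v : ℝ) + 1))
        (fun v : V => 1 / Real.sqrt ((outDeg A v : ℝ) + 1))
      have h1 : ∀ v : V, (0:ℝ) < (outDeg A v : ℝ) + 1 := fun v => by positivity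
      have e1 : ∀ v : V, Real.sqrt ((outDeg A v : ℝ) + 1) *
          (1 / Real.sqrt ((outDeg A v : ℝ) + 1)) = 1 := by
        intro v
        rw [mul_one_div, div_self (by positivity)]
      have e2 : ∀ v : V, Real.sqrt ((outDeg A v : ℝ) + 1) ^ 2 = (outDeg A v : ℝ) + 1 :=
        fun v => Real.sq_sqrt (h1 v).le
      have e3 : ∀ v : V, (1 / Real.sqrt ((outDeg A v : ℝ) + 1)) ^ 2 =
          1 / ((outDeg A v : ℝ) + 1) := by
        intro v
        rw [div_pow, one_pow, Real.sq_sqrt (h1 v).le]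
      simp only [e1, e2, e3, Finset.sum_const, Finset.card_univ, nsmul_eq_mul, mul_one] at key
      have e4 : ∑ v : V, ((outDeg A v : ℝ) + 1) = m + n := by
        rw [Finset.sum_add_distrib, Finset.sum_const, Finset.card_univ, nsmul_eq_mul,
          mul_one, hn]
      rw [e4] at key
      calc (n:ℝ)^2 = ((Fintype.card V : ℝ))^2 := by rw [hn]
        _ ≤ _ := key
    have hmn : (0:ℝ) < m + n := by linarith
    have hkey : (n:ℝ) / (dbar + 1) ≤ S.card := by
      have hdbar : (n:ℝ) / (dbar + 1) = (n:ℝ)^2 / (m + n) := by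
        rw [hd]
        field_simp
      rw [hdbar, div_le_iff₀ hmn]
      nlinarith [hCS, hsum', hmn]
    refine ⟨?_, S, hSac, hkey⟩
    -- tau0 bound
    have htau : (tau0 A : ℝ) ≤ (n : ℝ) - S.card := by
      have h1 : tau0 A ≤ (Finset.univ \ S).card := by
        apply Nat.sInf_le
        refine ⟨Finset.univ \ S, ?_, rfl⟩
        have : Finset.univ \ (Finset.univ \ S) = S := by
          rw [Finset.sdiff_sdiff_self_left, Finset.univ_inter]
        rwa [this]
      have h2 : (Finset.univ \ S).card = Fintype.card V - S.card :=
        by rw [Finset.card_sdiff_of_subset (Finset.subset_univ S), Finset.card_univ]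
      have h3 : S.card ≤ n := hn ▸ (Finset.card_le_card (Finset.subset_univ S)).trans_eq
        Finset.card_univ
      calc (tau0 A : ℝ) ≤ ((Fintype.card V - S.card : ℕ) : ℝ) := by exact_mod_cast h1.trans_eq h2
        _ = (n:ℝ) - S.card := by
            rw [Nat.cast_sub (by omega : S.card ≤ Fintype.card V)]; rw [hn]
    have : (n:ℝ) * (1 - 1/(dbar+1)) = n - n/(dbar+1) := by ring
    linarith
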